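/- Let n > 0 be an integer with n ≡ 0 or 3 (mod 4), written as −n = D_n·f_n² with D_n a fundamental discriminant, let N be an odd squarefree positive integer, and let m be a divisor of N. Then Σ_{d | f_n, gcd(d,N)=1} μ(d)·(D_n/d)·σ_{m,N,1}(f_n/d) = (∏_{p prime, p | N/m} f_p) · (∏_{p prime, p | f_n, p ∤ N} D_p(n)). -/

import Mathlib

open scoped BigOperators

/-- The Kronecker symbol `(D/p)` at a prime `p`. -/
def kronP (D : ℤ) (p : ℕ) : ℤ :=
  if p = 2 then
    if D % 2 = 0 then 0 else if D % 8 = 1 ∨ D % 8 = 7 then 1 else -1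
  else jacobiSym D p

/-- The Kronecker symbol `(D/m)` for positive `m`: the completely multiplicative
function of `m` determined by its values at primes. -/
def kron (D : ℤ) (m : ℕ) : ℤ :=
  m.factorization.prod fun p k => kronP D p ^ k

/-- Fundamental discriminant: `1`, or squarefree `≡ 1 (mod 4)`, or `4k` with
`k ≡ 2, 3 (mod 4)` squarefree. -/
def IsFundDisc (D : ℤ) : Prop :=
  D = 1 ∨ (D % 4 = 1 ∧ Squarefree D) ∨
    ∃ k : ℤ, D = 4 * k ∧ (k % 4 = 2 ∨ k % 4 = 3) ∧ Squarefree k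

/-- The decomposition `a = D·f²` with `D` a fundamental discriminant, `f ≥ 1`. -/
noncomputable def fdpair (a : ℤ) : ℤ × ℕ := by
  classical
  exact if h : ∃ p : ℤ × ℕ, IsFundDisc p.1 ∧ 1 ≤ p.2 ∧ a = p.1 * (p.2 : ℤ) ^ 2
    then h.choose else (0, 0)

/-- `D_n`, the fundamental discriminant with `-n = D_n · f_n²`. -/
noncomputable def Dn (n : ℕ) : ℤ := (fdpair (-(n : ℤ))).1

/-- `f_n`, the conductor with `-n = D_n · f_n²`. -/
noncomputable def fn (n : ℕ) : ℕ := (fdpair (-(n : ℤ))).2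

/-- `f_p := p^(v_p f)`, the `p`-part of `f`. -/
def ppart (f p : ℕ) : ℕ := p ^ f.factorization p

/-- The weight `w(a,b,c)` in the definition of the Hurwitz class number. -/
def hurwitzW (a b c : ℤ) : ℚ :=
  if a = b ∧ b = c then 3 else if b = 0 ∧ a = c then 2 else 1

/-- The Hurwitz class number `H(n)`: `H(0) = -1/12`, and for `n > 0` the weighted
count of reduced forms of discriminant `-n` (automatically `0` for `n ≡ 1, 2 mod 4`). -/
noncomputable def hurwitz (n : ℕ) : ℚ :=
  if n = 0 then -(1 / 12)
  else
    ∑ a ∈ Finset.Icc (1 : ℤ) (n : ℤ), ∑ b ∈ Finset.Icc (-(n : ℤ)) (n : ℤ),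
      ∑ c ∈ Finset.Icc (1 : ℤ) ((n : ℤ) ^ 2 + (n : ℤ)),
        if b ^ 2 - 4 * a * c = -(n : ℤ) ∧ |b| ≤ a ∧ a ≤ c ∧ ((|b| = a ∨ a = c) → 0 ≤ b)
        then (hurwitzW a b c)⁻¹ else 0

/-- `L(0, χ_D) = -(1/|D|) Σ_{a=1}^{|D|} (D/a) a` for a fundamental discriminant `D < 0`. -/
noncomputable def Lval (D : ℤ) : ℚ :=
  -(1 / (D.natAbs : ℚ)) * ∑ a ∈ Finset.Icc 1 D.natAbs, (kron D a : ℚ) * (a : ℚ)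

/-- `L_m(0, χ_D) = L(0,χ_D) ∏_{p ∣ m} (1 - (D/p))`. -/
noncomputable def LvalM (m : ℕ) (D : ℤ) : ℚ :=
  Lval D * ∏ p ∈ m.primeFactors, (1 - (kron D p : ℚ))

/-- `σ_{m,N,1}(r) = Σ_{d ∣ r, gcd(d,m)=1, gcd(r/d, N/m)=1} d`. -/
def sigmaMN (m N r : ℕ) : ℕ :=
  ∑ d ∈ r.divisors, if Nat.gcd d m = 1 ∧ Nat.gcd (r / d) (N / m) = 1 then d else 0

/-- The Pei–Wang generalized Hurwitz class number `H_{m,N}(n)`. -/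
noncomputable def HPW (m N n : ℕ) : ℚ :=
  if n = 0 then
    if m = N then -(1 / 12) * ∏ p ∈ N.primeFactors, (1 - (p : ℚ)) else 0
  else if n % 4 = 0 ∨ n % 4 = 3 then
    LvalM m (Dn n) *
      (∏ p ∈ (N / m).primeFactors,
        (1 - (kron (Dn n) p : ℚ) / (p : ℚ)) / (1 - ((p : ℚ)⁻¹) ^ 2)) *
      ∑ a ∈ (fn n).divisors,
        if Nat.gcd a N = 1 then
          (ArithmeticFunction.moebius a : ℚ) * (kron (Dn n) a : ℚ) *
            (sigmaMN m N (fn n / a) : ℚ)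
        else 0
  else 0

/-- The Li–Skoruppa–Zhou modified class number `H^{(N₁,N₂)}(n)`. -/
noncomputable def HLSZ (N₁ N₂ n : ℕ) : ℚ :=
  if n = 0 then
    -(1 / 12) * (∏ p ∈ N₁.primeFactors, (1 - (p : ℚ))) *
      ∏ p ∈ N₂.primeFactors, ((p : ℚ) + 1)
  else if n % 4 = 0 ∨ n % 4 = 3 then
    hurwitz (n / (∏ p ∈ (N₁ * N₂).primeFactors, ppart (fn n) p) ^ 2) *
      (∏ p ∈ N₁.primeFactors, (1 - (kron (Dn n) p : ℚ))) *
      ∏ p ∈ N₂.primeFactors,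
        ((2 * (p : ℚ) * (ppart (fn n) p : ℚ) - (p : ℚ) - 1 -
            (kron (Dn n) p : ℚ) * (2 * (ppart (fn n) p : ℚ) - (p : ℚ) - 1)) /
          ((p : ℚ) - 1))
  else 0

/-- Number of distinct prime divisors, `ω(N)`. -/
def omegaN (N : ℕ) : ℕ := N.primeFactors.card

/-- The local factor `A_p(n)`, for `-n = D·f²`. -/
noncomputable def locA (D : ℤ) (f p : ℕ) : ℚ :=
  (ppart f p : ℚ) * (1 - (kron D p : ℚ) / (p : ℚ)) / (1 - ((p : ℚ)⁻¹) ^ 2)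

/-- The local factor `B_p(n)`, for `-n = D·f²`. -/
noncomputable def locB (D : ℤ) (f p : ℕ) : ℚ :=
  (2 * (p : ℚ) * (ppart f p : ℚ) - (p : ℚ) - 1 -
      (kron D p : ℚ) * (2 * (ppart f p : ℚ) - (p : ℚ) - 1)) / ((p : ℚ) - 1)

/-- The local factor `C_p(n)`, for `-n = D·f²`. -/
noncomputable def locC (D : ℤ) (p : ℕ) : ℚ := 1 - (kron D p : ℚ)

/-- The local factor `D_p(n) = σ₁(f_p) - σ₁(f_p/p)·(D/p)`, for `-n = D·f²`. -/
noncomputable def locD (D : ℤ) (f p : ℕ) : ℚ :=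
  (ArithmeticFunction.sigma 1 (ppart f p) : ℚ) -
    (ArithmeticFunction.sigma 1 (ppart f p / p) : ℚ) * (kron D p : ℚ)

/-- The character local factor `D_p(ℓ,n) = σ₁(f_p) - σ₁(f_p/p)·(D_{ℓ,n}/p)·(p/ℓ)`. -/
noncomputable def locDchar (l : ℕ) (D : ℤ) (f p : ℕ) : ℚ :=
  (ArithmeticFunction.sigma 1 (ppart f p) : ℚ) -
    (ArithmeticFunction.sigma 1 (ppart f p / p) : ℚ) * (kron D p : ℚ) *
      (jacobiSym (p : ℤ) l : ℚ)

/-- The Pei–Wang generalized class number `H(ℓ, m, N; n)` with character `χ_ℓ`. -/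
noncomputable def HPWchar (l m N n : ℕ) : ℚ := by
  classical
  exact
    if n = 0 then
      if m = N then -(1 / 12) * ∏ p ∈ N.primeFactors, (1 - (p : ℚ)) else 0
    else if (∃ q : ℤ × ℕ, IsFundDisc q.1 ∧ 1 ≤ q.2 ∧
            -(((-1 : ℤ) ^ ((l - 1) / 2)) * (n : ℤ)) = q.1 * (q.2 : ℤ) ^ 2) ∧
        (∃ q : ℤ × ℕ, IsFundDisc q.1 ∧ 1 ≤ q.2 ∧
            -((l : ℤ) * (n : ℤ)) = q.1 * (q.2 : ℤ) ^ 2) then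
      LvalM m (fdpair (-((l : ℤ) * (n : ℤ)))).1 *
        (∏ p ∈ (N / m).primeFactors,
          (1 - (kron (fdpair (-((l : ℤ) * (n : ℤ)))).1 p : ℚ) / (p : ℚ)) /
            (1 - ((p : ℚ)⁻¹) ^ 2)) *
        ((Int.gcd (l : ℤ) (fdpair (-(((-1 : ℤ) ^ ((l - 1) / 2)) * (n : ℤ)))).1 : ℚ) /
          (Nat.gcd (Int.gcd (l : ℤ) (fdpair (-(((-1 : ℤ) ^ ((l - 1) / 2)) * (n : ℤ)))).1) m : ℚ)) *
        ∑ a ∈ (fdpair (-(((-1 : ℤ) ^ ((l - 1) / 2)) * (n : ℤ)))).2.divisors,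
          if Nat.gcd a N = 1 then
            (ArithmeticFunction.moebius a : ℚ) *
              (kron (fdpair (-(((-1 : ℤ) ^ ((l - 1) / 2)) * (n : ℤ)))).1 a : ℚ) *
              (jacobiSym (a : ℤ) l : ℚ) *
              (sigmaMN m N ((fdpair (-(((-1 : ℤ) ^ ((l - 1) / 2)) * (n : ℤ)))).2 / a) : ℚ)
          else 0
    else 0

section MoebiusSumLocal

open ArithmeticFunction Finset

lemma kron_one' (D : ℤ) : kron D 1 = 1 := by simp [kron]

lemma kron_mul' (D : ℤ) {a b : ℕ} (ha : a ≠ 0) (hb : b ≠ 0) :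
    kron D (a * b) = kron D a * kron D b := by
  unfold kron
  rw [Nat.factorization_mul ha hb]
  exact Finsupp.prod_add_index' (fun p => pow_zero _) (fun p k1 k2 => pow_add _ _ _)

lemma kron_prime_pow' (D : ℤ) {p : ℕ} (hp : p.Prime) (k : ℕ) :
    kron D (p ^ k) = kron D p ^ k := by
  unfold kron
  rw [hp.factorization_pow, hp.factorization]
  rw [Finsupp.prod_single_index (h := fun q e => kronP D q ^ e) (pow_zero _),
    Finsupp.prod_single_index (h := fun q e => kronP D q ^ e) (pow_zero _), pow_one]

/-- `μ(d)·(D/d)` restricted to `d` coprime to `N`. -/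
noncomputable def gAF (D : ℤ) (N : ℕ) : ArithmeticFunction ℚ :=
  ⟨fun d => if Nat.gcd d N = 1 then (moebius d : ℚ) * (kron D d : ℚ) else 0, by
    by_cases h : Nat.gcd 0 N = 1 <;> simp [h]⟩

noncomputable def uAF (m : ℕ) : ArithmeticFunction ℚ :=
  ⟨fun d => if Nat.gcd d m = 1 then (d : ℚ) else 0, by
    by_cases h : Nat.gcd 0 m = 1 <;> simp [h]⟩

noncomputable def vAF (N m : ℕ) : ArithmeticFunction ℚ :=
  ⟨fun e => if e ≠ 0 ∧ Nat.gcd e (N / m) = 1 then 1 else 0, by simp⟩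

noncomputable def sAF (N m : ℕ) : ArithmeticFunction ℚ := uAF m * vAF N m

lemma gAF_mult (D : ℤ) (N : ℕ) : (gAF D N).IsMultiplicative := by
  refine ⟨by simp [gAF, kron_one'], ?_⟩
  intro a b hab
  rcases eq_or_ne a 0 with rfl | ha
  · simp
  rcases eq_or_ne b 0 with rfl | hb
  · simp
  simp only [gAF, coe_mk]
  by_cases h1 : Nat.gcd a N = 1
  · by_cases h2 : Nat.gcd b N = 1
    · rw [if_pos (Nat.Coprime.mul h1 h2), if_pos h1, if_pos h2,
        isMultiplicative_moebius.map_mul_of_coprime hab, kron_mul' D ha hb]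
      push_cast; ring
    · rw [if_neg (fun h => h2 (Nat.Coprime.coprime_dvd_left (dvd_mul_left b a) h)),
        if_pos h1, if_neg h2, mul_zero]
  · rw [if_neg (fun h => h1 (Nat.Coprime.coprime_dvd_left (dvd_mul_right a b) h)),
      if_neg h1, zero_mul]

lemma uAF_mult (m : ℕ) : (uAF m).IsMultiplicative := by
  refine ⟨by simp [uAF], ?_⟩
  intro a b hab
  simp only [uAF, coe_mk]
  by_cases h1 : Nat.gcd a m = 1
  · by_cases h2 : Nat.gcd b m = 1
    · rw [if_pos (Nat.Coprime.mul h1 h2), if_pos h1, if_pos h2]; push_cast; ring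
    · rw [if_neg (fun h => h2 (Nat.Coprime.coprime_dvd_left (dvd_mul_left b a) h)),
        if_pos h1, if_neg h2, mul_zero]
  · rw [if_neg (fun h => h1 (Nat.Coprime.coprime_dvd_left (dvd_mul_right a b) h)),
      if_neg h1, zero_mul]

lemma vAF_mult (N m : ℕ) : (vAF N m).IsMultiplicative := by
  refine ⟨by simp [vAF], ?_⟩
  intro a b hab
  rcases eq_or_ne a 0 with rfl | ha
  · simp
  rcases eq_or_ne b 0 with rfl | hb
  · simp
  have hmul : Nat.gcd (a * b) (N / m) = 1 ↔ Nat.gcd a (N / m) = 1 ∧ Nat.gcd b (N / m) = 1 :=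
    Nat.coprime_mul_iff_left
  by_cases h1 : Nat.gcd a (N / m) = 1 <;> by_cases h2 : Nat.gcd b (N / m) = 1 <;>
    simp [vAF, coe_mk, hmul, ha, hb, mul_ne_zero ha hb, h1, h2]

lemma sAF_mult (N m : ℕ) : (sAF N m).IsMultiplicative :=
  (uAF_mult m).mul (vAF_mult N m)

lemma sAF_apply (N m r : ℕ) : sAF N m r = (sigmaMN m N r : ℚ) := by
  rcases eq_or_ne r 0 with rfl | hr
  · simp [sigmaMN]
  rw [sAF, mul_apply, Nat.sum_divisorsAntidiagonal (f := fun x y => uAF m x * vAF N m y),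
    sigmaMN]
  push_cast
  refine Finset.sum_congr rfl fun d hd => ?_
  have hd' : d ∣ r := (Nat.mem_divisors.mp hd).1
  have hrd : r / d ≠ 0 :=
    Nat.div_ne_zero_iff.mpr ⟨(Nat.pos_of_mem_divisors hd).ne',
      (Nat.le_of_dvd (Nat.pos_of_ne_zero hr) hd')⟩
  simp only [uAF, vAF, coe_mk]
  by_cases h1 : Nat.gcd d m = 1 <;> by_cases h2 : Nat.gcd (r / d) (N / m) = 1 <;>
    simp [h1, h2, hrd]

lemma sigmaMN_of_coprime {N m r : ℕ} (hm : m ∣ N) (hr : Nat.Coprime r N) :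
    sigmaMN m N r = ArithmeticFunction.sigma 1 r := by
  rw [sigmaMN, sigma_one_apply]
  refine Finset.sum_congr rfl fun d hd => ?_
  have hd' : d ∣ r := (Nat.mem_divisors.mp hd).1
  have h1 : Nat.gcd d m = 1 :=
    Nat.Coprime.coprime_dvd_left hd' (hr.coprime_dvd_right hm)
  have h2 : Nat.gcd (r / d) (N / m) = 1 :=
    Nat.Coprime.coprime_dvd_left (Nat.div_dvd_of_dvd hd')
      (hr.coprime_dvd_right (Nat.div_dvd_of_dvd hm))
  simp [h1, h2]

lemma coprime_m_div {N m : ℕ} (hsf : Squarefree N) (hm : m ∣ N) :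
    Nat.Coprime m (N / m) :=
  Nat.coprime_of_squarefree_mul (by rwa [Nat.mul_div_cancel' hm])

lemma sigmaMN_pow_dvd_div {N m p : ℕ} (hp : p.Prime) (hm : m ∣ N) (hsf : Squarefree N)
    (hpd : p ∣ N / m) (a : ℕ) : sigmaMN m N (p ^ a) = p ^ a := by
  have hcop : Nat.Coprime m (N / m) := coprime_m_div hsf hm
  have hpm : ¬ p ∣ m := fun h =>
    hp.one_lt.ne' (Nat.dvd_one.mp (hcop ▸ Nat.dvd_gcd h hpd))
  rw [sigmaMN, Nat.sum_divisors_prime_pow hp]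
  have key : ∀ i ∈ Finset.range (a + 1),
      (if Nat.gcd (p ^ i) m = 1 ∧ Nat.gcd (p ^ a / p ^ i) (N / m) = 1 then p ^ i else 0)
        = if i = a then p ^ a else 0 := by
    intro i hi
    have hia : i ≤ a := Nat.lt_succ_iff.mp (Finset.mem_range.mp hi)
    rw [Nat.pow_div hia hp.pos]
    have h1 : Nat.gcd (p ^ i) m = 1 :=
      Nat.Coprime.pow_left _ ((Nat.Prime.coprime_iff_not_dvd hp).mpr hpm)
    rcases eq_or_lt_of_le hia with rfl | hlt
    · simp [h1]
    · have h2 : ¬ Nat.gcd (p ^ (a - i)) (N / m) = 1 := by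
        intro h
        exact hp.one_lt.ne' (Nat.dvd_one.mp
          (h ▸ Nat.dvd_gcd (dvd_pow_self p (Nat.sub_ne_zero_of_lt hlt)) hpd))
      simp [h1, h2, hlt.ne]
  rw [Finset.sum_congr rfl key, Finset.sum_ite_eq' (Finset.range (a + 1)) a (fun _ => p ^ a),
    if_pos (Finset.self_mem_range_succ a)]

lemma sigmaMN_pow_dvd_m {N m p : ℕ} (hp : p.Prime) (hm : m ∣ N) (hsf : Squarefree N)
    (hpm : p ∣ m) (a : ℕ) : sigmaMN m N (p ^ a) = 1 := by
  have hcop : Nat.Coprime m (N / m) := coprime_m_div hsf hm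
  have hpd : ¬ p ∣ N / m := fun h =>
    hp.one_lt.ne' (Nat.dvd_one.mp (hcop ▸ Nat.dvd_gcd hpm h))
  rw [sigmaMN, Nat.sum_divisors_prime_pow hp]
  have key : ∀ i ∈ Finset.range (a + 1),
      (if Nat.gcd (p ^ i) m = 1 ∧ Nat.gcd (p ^ a / p ^ i) (N / m) = 1 then p ^ i else 0)
        = if i = 0 then 1 else 0 := by
    intro i hi
    have hia : i ≤ a := Nat.lt_succ_iff.mp (Finset.mem_range.mp hi)
    rcases eq_or_ne i 0 with rfl | hi0
    · have h2 : Nat.gcd (p ^ a) (N / m) = 1 :=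
        Nat.Coprime.pow_left _ ((Nat.Prime.coprime_iff_not_dvd hp).mpr hpd)
      simp [h2]
    · have h1 : ¬ Nat.gcd (p ^ i) m = 1 := by
        intro h
        exact hp.one_lt.ne' (Nat.dvd_one.mp
          (h ▸ Nat.dvd_gcd (dvd_pow_self p hi0) hpm))
      simp [h1, hi0]
  rw [Finset.sum_congr rfl key, Finset.sum_ite_eq' (Finset.range (a + 1)) 0 (fun _ => 1),
    if_pos (Finset.mem_range.mpr (Nat.succ_pos a))]

end MoebiusSumLocal

section MoebiusSumLocal2

open ArithmeticFunction Finset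

lemma F_pp_dvd (D : ℤ) {N m p : ℕ} (hp : p.Prime) (hpN : p ∣ N) (a : ℕ) :
    (gAF D N * sAF N m) (p ^ a) = (sigmaMN m N (p ^ a) : ℚ) := by
  rw [ArithmeticFunction.mul_apply,
    Nat.sum_divisorsAntidiagonal (f := fun x y => gAF D N x * sAF N m y),
    Nat.sum_divisors_prime_pow hp]
  have key : ∀ i ∈ Finset.range (a + 1),
      gAF D N (p ^ i) * sAF N m (p ^ a / p ^ i)
        = if i = 0 then (sigmaMN m N (p ^ a) : ℚ) else 0 := by
    intro i hi
    rcases eq_or_ne i 0 with rfl | hi0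
    · rw [pow_zero, Nat.div_one, sAF_apply, (gAF_mult D N).1, one_mul, if_pos rfl]
    · have hg : gAF D N (p ^ i) = 0 := by
        simp only [gAF, ArithmeticFunction.coe_mk]
        rw [if_neg]
        intro h
        exact hp.one_lt.ne' (Nat.dvd_one.mp (h ▸ Nat.dvd_gcd (dvd_pow_self p hi0) hpN))
      rw [hg, zero_mul, if_neg hi0]
  rw [Finset.sum_congr rfl key,
    Finset.sum_ite_eq' (Finset.range (a + 1)) 0 (fun _ => (sigmaMN m N (p ^ a) : ℚ)),
    if_pos (Finset.mem_range.mpr (Nat.succ_pos a))]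

lemma F_pp_ndvd (D : ℤ) {N m p : ℕ} (hp : p.Prime) (hm : m ∣ N) (hpN : ¬ p ∣ N)
    {a : ℕ} (ha : 1 ≤ a) :
    (gAF D N * sAF N m) (p ^ a) =
      (ArithmeticFunction.sigma 1 (p ^ a) : ℚ) -
        (ArithmeticFunction.sigma 1 (p ^ (a - 1)) : ℚ) * (kron D p : ℚ) := by
  have hcp : Nat.Coprime p N := (Nat.Prime.coprime_iff_not_dvd hp).mpr hpN
  have hs : ∀ k : ℕ, sAF N m (p ^ k) = (ArithmeticFunction.sigma 1 (p ^ k) : ℚ) := fun k => by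
    rw [sAF_apply, sigmaMN_of_coprime hm (hcp.pow_left _)]
  rw [ArithmeticFunction.mul_apply,
    Nat.sum_divisorsAntidiagonal (f := fun x y => gAF D N x * sAF N m y),
    Nat.sum_divisors_prime_pow hp]
  have key : ∀ i ∈ Finset.range (a + 1),
      gAF D N (p ^ i) * sAF N m (p ^ a / p ^ i)
        = (if i = 0 then (ArithmeticFunction.sigma 1 (p ^ a) : ℚ) else 0)
          + (if i = 1 then -(kron D p : ℚ) * (ArithmeticFunction.sigma 1 (p ^ (a - 1)) : ℚ)
              else 0) := by
    intro i hi
    have hia : i ≤ a := Nat.lt_succ_iff.mp (Finset.mem_range.mp hi)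
    rw [Nat.pow_div hia hp.pos]
    match i with
    | 0 =>
      rw [pow_zero, (gAF_mult D N).1, one_mul, Nat.sub_zero, hs]
      norm_num
    | 1 =>
      have hg : gAF D N (p ^ 1) = -(kron D p : ℚ) := by
        simp only [gAF, ArithmeticFunction.coe_mk, pow_one]
        rw [if_pos hcp, moebius_apply_prime hp]
        push_cast; ring
      rw [hg, hs]
      norm_num
    | (i + 2) =>
      have hmu : moebius (p ^ (i + 2)) = 0 := by
        rw [moebius_apply_prime_pow hp (by omega), if_neg (by omega)]
      have hg : gAF D N (p ^ (i + 2)) = 0 := by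
        simp only [gAF, ArithmeticFunction.coe_mk, hmu]
        simp
      rw [hg, zero_mul, if_neg (by omega : ¬ i + 2 = 0), if_neg (by omega : ¬ i + 2 = 1),
        add_zero]
  rw [Finset.sum_congr rfl key, Finset.sum_add_distrib,
    Finset.sum_ite_eq' (Finset.range (a + 1)) 0
      (fun _ => (ArithmeticFunction.sigma 1 (p ^ a) : ℚ)),
    Finset.sum_ite_eq' (Finset.range (a + 1)) 1
      (fun _ => -(kron D p : ℚ) * (ArithmeticFunction.sigma 1 (p ^ (a - 1)) : ℚ)),
    if_pos (Finset.mem_range.mpr (Nat.succ_pos a)),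
    if_pos (Finset.mem_range.mpr (by omega : 1 < a + 1))]
  ring

end MoebiusSumLocal2

/-- Lemma: the Möbius–Kronecker divisor sum factors into local parts. -/
theorem moebius_sum_local (n : ℕ) (hn : 0 < n) (h4 : n % 4 = 0 ∨ n % 4 = 3)
    (D : ℤ) (f : ℕ) (hD : IsFundDisc D) (hf : 1 ≤ f)
    (hDf : -(n : ℤ) = D * (f : ℤ) ^ 2)
    (N m : ℕ) (hN : 0 < N) (hNodd : Odd N) (hNsf : Squarefree N) (hm : m ∣ N) :
    (∑ d ∈ f.divisors,
        if Nat.gcd d N = 1 then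
          (ArithmeticFunction.moebius d : ℚ) * (kron D d : ℚ) *
            (sigmaMN m N (f / d) : ℚ)
        else 0) =
      (∏ p ∈ (N / m).primeFactors, (ppart f p : ℚ)) *
        ∏ p ∈ f.primeFactors.filter fun p => ¬p ∣ N, locD D f p := by
  classical
  open ArithmeticFunction Finset in
  have hf0 : f ≠ 0 := by omega
  have hN0 : N ≠ 0 := hN.ne'
  have hm0 : 0 < m := Nat.pos_of_dvd_of_pos hm hN
  have hNm0 : N / m ≠ 0 := (Nat.div_pos (Nat.le_of_dvd hN hm) hm0).ne'
  have hcop : Nat.Coprime m (N / m) := coprime_m_div hNsf hm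
  have hL : (∑ d ∈ f.divisors, if Nat.gcd d N = 1 then
        (ArithmeticFunction.moebius d : ℚ) * (kron D d : ℚ) * (sigmaMN m N (f / d) : ℚ)
      else 0) = (gAF D N * sAF N m) f := by
    rw [ArithmeticFunction.mul_apply,
      Nat.sum_divisorsAntidiagonal (f := fun x y => gAF D N x * sAF N m y)]
    refine Finset.sum_congr rfl fun d hd => ?_
    rw [sAF_apply]
    simp only [gAF, ArithmeticFunction.coe_mk]
    by_cases h : Nat.gcd d N = 1
    · rw [if_pos h, if_pos h]
    · rw [if_neg h, if_neg h, zero_mul]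
  rw [hL,
    ((gAF_mult D N).mul (sAF_mult N m)).multiplicative_factorization _ hf0]
  have hprod : (f.factorization.prod fun p k => (gAF D N * sAF N m) (p ^ k))
      = ∏ p ∈ f.primeFactors, (gAF D N * sAF N m) (p ^ f.factorization p) := rfl
  rw [hprod, ← Finset.prod_filter_mul_prod_filter_not f.primeFactors (· ∣ N)
      (fun p => (gAF D N * sAF N m) (p ^ f.factorization p))]
  congr 1
  · -- primes dividing N
    have step1 : ∀ p ∈ f.primeFactors.filter (· ∣ N),
        (gAF D N * sAF N m) (p ^ f.factorization p)
          = if p ∣ N / m then (ppart f p : ℚ) else 1 := by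
      intro p hp
      simp only [Finset.mem_filter, Nat.mem_primeFactors] at hp
      obtain ⟨⟨hpp, hpf, -⟩, hpN⟩ := hp
      rw [F_pp_dvd D hpp hpN]
      by_cases hpd : p ∣ N / m
      · rw [if_pos hpd, sigmaMN_pow_dvd_div hpp hm hNsf hpd]
        simp [ppart]
      · have hpm : p ∣ m := by
          have : p ∣ m * (N / m) := by rwa [Nat.mul_div_cancel' hm]
          rcases (Nat.Prime.dvd_mul hpp).mp this with h | h
          · exact h
          · exact absurd h hpd
        rw [if_neg hpd, sigmaMN_pow_dvd_m hpp hm hNsf hpm]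
        norm_num
    rw [Finset.prod_congr rfl step1, Finset.prod_ite, Finset.prod_const_one, mul_one]
    have hset : ((f.primeFactors.filter (· ∣ N)).filter (· ∣ N / m))
        = f.primeFactors.filter (· ∣ N / m) := by
      ext p
      simp only [Finset.mem_filter]
      exact ⟨fun h => ⟨h.1.1, h.2⟩,
        fun h => ⟨⟨h.1, h.2.trans (Nat.div_dvd_of_dvd hm)⟩, h.2⟩⟩
    rw [hset]
    refine Finset.prod_subset ?_ ?_
    · intro p hp
      simp only [Finset.mem_filter, Nat.mem_primeFactors] at hp ⊢
      exact ⟨hp.1.1, hp.2, hNm0⟩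
    · intro p hp hnp
      have hzero : f.factorization p = 0 := by
        by_cases hpf : p ∈ f.primeFactors
        · refine absurd ?_ hnp
          refine Finset.mem_filter.mpr ⟨hpf, ?_⟩
          exact (Nat.mem_primeFactors.mp hp).2.1
        · exact Finsupp.notMem_support_iff.mp (by simpa using hpf)
      simp [ppart, hzero]
  · -- primes not dividing N
    refine Finset.prod_congr rfl fun p hp => ?_
    simp only [Finset.mem_filter, Nat.mem_primeFactors] at hp
    obtain ⟨⟨hpp, hpf, -⟩, hpN⟩ := hp
    have ha : 1 ≤ f.factorization p := Nat.Prime.factorization_pos_of_dvd hpp hf0 hpf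
    have h1 : ppart f p = p ^ f.factorization p := rfl
    have h2 : ppart f p / p = p ^ (f.factorization p - 1) := by
      rw [h1, ← Nat.pow_div ha hpp.pos, pow_one]
    rw [F_pp_ndvd D hpp hm hpN ha, locD, h2, h1]
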